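/- For every real x with 0 ≤ x ≤ 1, the binary entropy function satisfies h(1/2 - x/2) ≤ 1 - x²/2. -/

import Mathlib

open Real

private lemma hasD (x : ℝ) (h1p : (0:ℝ) < 1 + x) (h1m : (0:ℝ) < 1 - x) :
    HasDerivAt (fun x : ℝ => log (1+x) - log (1-x) - 2*x)
      (1/(1+x) - (-1)/(1-x) - 2) x := by
  have ha : HasDerivAt (fun x : ℝ => log (1+x)) (1/(1+x)) x := by
    have := ((hasDerivAt_id x).const_add 1).log h1p.ne'
    simpa using this
  have hb : HasDerivAt (fun x : ℝ => log (1-x)) ((-1)/(1-x)) x := by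
    have := ((hasDerivAt_id x).const_sub 1).log h1m.ne'
    simpa using this
  have h := (ha.sub hb).sub ((hasDerivAt_id x).const_mul 2)
  simp only [mul_one] at h
  exact h

private lemma phi_nonneg : ∀ x ∈ Set.Ico (0:ℝ) 1, 2*x ≤ log (1+x) - log (1-x) := by
  have hmono : MonotoneOn (fun x : ℝ => log (1+x) - log (1-x) - 2*x) (Set.Ico 0 1) := by
    apply monotoneOn_of_deriv_nonneg (convex_Ico 0 1)
    · apply ContinuousOn.sub (ContinuousOn.sub ?_ ?_) (by fun_prop)
      · exact (continuousOn_const.add continuousOn_id).log (fun x hx => by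
          simp only [Set.mem_Ico] at hx; simp; linarith [hx.1])
      · exact (continuousOn_const.sub continuousOn_id).log (fun x hx => by
          simp only [Set.mem_Ico] at hx; simp; linarith [hx.2])
    · intro x hx
      rw [interior_Ico] at hx
      exact (hasD x (by linarith [hx.1]) (by linarith [hx.2])).differentiableAt.differentiableWithinAt
    · intro x hx
      rw [interior_Ico] at hx
      have h1p : (0:ℝ) < 1 + x := by linarith [hx.1]
      have h1m : (0:ℝ) < 1 - x := by linarith [hx.2]
      rw [(hasD x h1p h1m).deriv]
      have key : 1/(1+x) - (-1)/(1-x) - 2 = 2*x^2/((1+x)*(1-x)) := by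
        field_simp; ring
      rw [key]; positivity
  intro x hx
  have := hmono (Set.mem_Ico.mpr ⟨le_refl 0, one_pos⟩) hx hx.1
  simp only [add_zero, sub_zero, log_one, mul_zero] at this
  linarith

private lemma key_ineq : ∀ x ∈ Set.Ico (0:ℝ) 1,
    x^2 ≤ (1+x) * log (1+x) + (1-x) * log (1-x) := by
  have hmono : MonotoneOn (fun x : ℝ => (1+x) * log (1+x) + (1-x) * log (1-x) - x^2)
      (Set.Ico 0 1) := by
    apply monotoneOn_of_deriv_nonneg (convex_Ico 0 1)
    · apply ContinuousOn.sub (ContinuousOn.add ?_ ?_) (by fun_prop)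
      · apply ContinuousOn.mul (by fun_prop)
        exact (continuousOn_const.add continuousOn_id).log (fun x hx => by
          simp only [Set.mem_Ico] at hx; simp; linarith [hx.1])
      · apply ContinuousOn.mul (by fun_prop)
        exact (continuousOn_const.sub continuousOn_id).log (fun x hx => by
          simp only [Set.mem_Ico] at hx; simp; linarith [hx.2])
    all_goals
      intro x hx
      rw [interior_Ico] at hx
      have h1p : (0:ℝ) < 1 + x := by linarith [hx.1]
      have h1m : (0:ℝ) < 1 - x := by linarith [hx.2]
      have ha : HasDerivAt (fun x : ℝ => log (1+x)) (1/(1+x)) x := by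
        simpa using ((hasDerivAt_id x).const_add 1).log h1p.ne'
      have hb : HasDerivAt (fun x : ℝ => log (1-x)) ((-1)/(1-x)) x := by
        simpa using ((hasDerivAt_id x).const_sub 1).log h1m.ne'
      have H : HasDerivAt (fun x : ℝ => (1+x) * log (1+x) + (1-x) * log (1-x) - x^2)
          ((1 * log (1+x) + (1+x) * (1/(1+x))) +
            ((-1) * log (1-x) + (1-x) * ((-1)/(1-x))) - 2*x) x := by
        have h1 : HasDerivAt (fun x : ℝ => (1+x) * log (1+x))
            (1 * log (1+x) + (1+x) * (1/(1+x))) x :=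
          (((hasDerivAt_id x).const_add 1).mul ha)
        have h2 : HasDerivAt (fun x : ℝ => (1-x) * log (1-x))
            ((-1) * log (1-x) + (1-x) * ((-1)/(1-x))) x := by
          have := (((hasDerivAt_id x).const_sub 1)).mul hb
          exact this
        have h3 : HasDerivAt (fun x : ℝ => x^2) (2*x) x := by
          simpa [mul_comm] using hasDerivAt_pow 2 x
        exact (h1.add h2).sub h3
      first
        | exact H.differentiableAt.differentiableWithinAt
        | · rw [H.deriv]
            have hphi := phi_nonneg x ⟨hx.1.le, hx.2⟩
            have e1 : (1+x) * (1/(1+x)) = 1 := by field_simp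
            have e2 : (1-x) * ((-1)/(1-x)) = -1 := by field_simp
            rw [e1, e2]
            linarith
  intro x hx
  have := hmono (Set.mem_Ico.mpr ⟨le_refl 0, one_pos⟩) hx hx.1
  simp only [add_zero, sub_zero, log_one, mul_zero, mul_one, zero_pow] at this
  norm_num at this
  linarith

/-- The binary entropy function `h(p) = -p log₂ p - (1-p) log₂ (1-p)`.
(Note `Real.logb 2 0 = 0` in Mathlib, so `h 0 = h 1 = 0` holds automatically.) -/
noncomputable def binEntropy2 (p : ℝ) : ℝ :=
  -p * Real.logb 2 p - (1 - p) * Real.logb 2 (1 - p)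

theorem stmt3 (x : ℝ) (hx0 : 0 ≤ x) (hx1 : x ≤ 1) :
    binEntropy2 (1 / 2 - x / 2) ≤ 1 - x ^ 2 / 2 := by
  rcases eq_or_lt_of_le hx1 with rfl | hx1'
  · norm_num [binEntropy2, Real.logb]
  · have h1p : (0:ℝ) < 1 + x := by linarith
    have h1m : (0:ℝ) < 1 - x := by linarith
    have hlog2 : (0:ℝ) < log 2 := Real.log_pos (by norm_num)
    have hkey := key_ineq x ⟨hx0, hx1'⟩
    have hlog2le : log 2 ≤ 1 := by
      have := Real.log_le_sub_one_of_pos (by norm_num : (0:ℝ) < 2)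
      linarith
    have hx2 : x^2 * log 2 ≤ x^2 := by nlinarith [sq_nonneg x]
    unfold binEntropy2
    have e1 : (1:ℝ)/2 - x/2 = (1-x)/2 := by ring
    have e2 : (1:ℝ) - (1-x)/2 = (1+x)/2 := by ring
    rw [e1, e2]
    rw [Real.logb, Real.logb, Real.log_div h1m.ne' (by norm_num),
        Real.log_div h1p.ne' (by norm_num)]
    have e3 : -((1-x)/2) * ((log (1-x) - log 2)/log 2) - (1+x)/2 * ((log (1+x) - log 2)/log 2)
        = (2*log 2 - ((1-x)*log (1-x) + (1+x)*log (1+x))) / (2 * log 2) := by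
      field_simp; ring
    rw [e3, div_le_iff₀ (by positivity)]
    nlinarith [hkey, hx2]
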